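/- Let f be the density f(x) = (1/σ̃)·φ(x/σ̃)·√(2π(1-ρ²))·ψ(-ρx/(√(1-ρ²)·σ̃)) with |ρ| < 1 and σ̃ > 0. Then ∫ x·f(x) dx = -√(π/2)·ρ·σ̃. -/

import Mathlib

open Real MeasureTheory

noncomputable def stdPhi (x : ℝ) : ℝ := (Real.sqrt (2 * Real.pi))⁻¹ * Real.exp (-x ^ 2 / 2)

noncomputable def stdCDF (x : ℝ) : ℝ := ∫ y in Set.Iic x, stdPhi y

noncomputable def psi (x : ℝ) : ℝ := stdPhi x + x * stdCDF x

noncomputable def peakDensity (ρ σ : ℝ) (x : ℝ) : ℝ :=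
  σ⁻¹ * stdPhi (x / σ) * Real.sqrt (2 * Real.pi * (1 - ρ ^ 2)) *
    psi (-ρ * x / (Real.sqrt (1 - ρ ^ 2) * σ))

/-! ### Auxiliary lemmas about `stdPhi` and `stdCDF` -/

lemma stdPhi_nonneg (x : ℝ) : 0 ≤ stdPhi x := by unfold stdPhi; positivity

lemma sqrt_two_pi_pos : 0 < Real.sqrt (2 * Real.pi) := Real.sqrt_pos.2 (by positivity)

lemma stdPhi_le (x : ℝ) : stdPhi x ≤ (Real.sqrt (2 * Real.pi))⁻¹ := by
  unfold stdPhi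
  have h1 : Real.exp (-x ^ 2 / 2) ≤ 1 := by
    rw [Real.exp_le_one_iff]; nlinarith [sq_nonneg x]
  exact mul_le_of_le_one_right (by positivity) h1

lemma stdPhi_even (x : ℝ) : stdPhi (-x) = stdPhi x := by simp [stdPhi, neg_sq]

lemma stdPhi_eq (x : ℝ) : stdPhi x = (Real.sqrt (2 * Real.pi))⁻¹ * Real.exp (-(1/2 : ℝ) * x ^ 2) := by
  unfold stdPhi; rw [show -x ^ 2 / 2 = -(1/2 : ℝ) * x ^ 2 by ring]

lemma continuous_stdPhi : Continuous stdPhi := by unfold stdPhi; fun_prop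

lemma integrable_stdPhi : Integrable stdPhi := by
  have heq : stdPhi = fun x => (Real.sqrt (2 * Real.pi))⁻¹ * Real.exp (-(1/2 : ℝ) * x ^ 2) :=
    funext fun x => stdPhi_eq x
  rw [heq]
  exact (integrable_exp_neg_mul_sq (by norm_num : (0:ℝ) < 1/2)).const_mul _

lemma integral_stdPhi : ∫ x, stdPhi x = 1 := by
  simp_rw [stdPhi_eq, integral_const_mul, integral_gaussian]
  rw [show Real.pi / (1/2) = 2 * Real.pi by ring]
  exact inv_mul_cancel₀ sqrt_two_pi_pos.ne'

lemma stdCDF_nonneg (x : ℝ) : 0 ≤ stdCDF x := integral_nonneg fun y => stdPhi_nonneg y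

lemma stdCDF_le_one (x : ℝ) : stdCDF x ≤ 1 := by
  rw [← integral_stdPhi]
  exact setIntegral_le_integral integrable_stdPhi (ae_of_all _ stdPhi_nonneg)

lemma stdCDF_mono : Monotone stdCDF := fun x y hxy =>
  setIntegral_mono_set integrable_stdPhi.integrableOn (ae_of_all _ stdPhi_nonneg)
    (HasSubset.Subset.eventuallyLE (Set.Iic_subset_Iic.2 hxy))

lemma measurable_stdCDF : Measurable stdCDF := stdCDF_mono.measurable

lemma stdCDF_neg (x : ℝ) : stdCDF (-x) = 1 - stdCDF x := by
  have h1 : stdCDF x = ∫ y in Set.Ioi (-x), stdPhi y := by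
    have h := integral_comp_neg_Iic x stdPhi
    simp_rw [stdPhi_even] at h
    exact h
  have h2 := intervalIntegral.integral_Iic_add_Ioi (b := -x) (f := stdPhi) (μ := volume)
    integrable_stdPhi.integrableOn integrable_stdPhi.integrableOn
  rw [integral_stdPhi] at h2
  unfold stdCDF at *
  linarith

/-! ### Decay bounds and integrability -/

lemma t_exp_le (t : ℝ) : t * Real.exp (-t) ≤ 1 := by
  rw [Real.exp_neg, ← div_eq_mul_inv, div_le_one (Real.exp_pos _)]
  linarith [Real.add_one_le_exp t]

lemma sq_mul_exp_le {c : ℝ} (hc : 0 < c) (x : ℝ) : x ^ 2 * Real.exp (-(c * x ^ 2)) ≤ c⁻¹ := by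
  have h1 : (c * x ^ 2) * Real.exp (-(c * x ^ 2)) ≤ 1 := t_exp_le _
  calc x ^ 2 * Real.exp (-(c * x ^ 2))
      = c⁻¹ * ((c * x ^ 2) * Real.exp (-(c * x ^ 2))) := by
        rw [← mul_assoc, ← mul_assoc, inv_mul_cancel₀ hc.ne', one_mul]
    _ ≤ c⁻¹ * 1 := mul_le_mul_of_nonneg_left h1 (by positivity)
    _ = c⁻¹ := mul_one _

lemma abs_mul_exp_le {c : ℝ} (hc : 0 < c) (x : ℝ) : |x| * Real.exp (-(c * x ^ 2)) ≤ 1 + c⁻¹ := by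
  have h1 : |x| ≤ 1 + x ^ 2 := by nlinarith [sq_abs x, sq_nonneg (|x| - 1)]
  have h2 : Real.exp (-(c * x ^ 2)) ≤ 1 := by
    rw [Real.exp_le_one_iff]; simp only [neg_nonpos]; positivity
  calc |x| * Real.exp (-(c * x ^ 2))
      ≤ (1 + x ^ 2) * Real.exp (-(c * x ^ 2)) :=
        mul_le_mul_of_nonneg_right h1 (Real.exp_pos _).le
    _ = Real.exp (-(c * x ^ 2)) + x ^ 2 * Real.exp (-(c * x ^ 2)) := by ring
    _ ≤ 1 + c⁻¹ := add_le_add h2 (sq_mul_exp_le hc x)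

lemma integrable_core {b : ℝ} (hb : 0 < b) {w k : ℝ → ℝ}
    (hwc : Measurable w) (hw : ∀ x, |w x| ≤ |x| + x ^ 2)
    (hkc : Measurable k) (hk : ∀ x, |k x| ≤ 1) :
    Integrable (fun x => w x * Real.exp (-(b * x ^ 2)) * k x) := by
  have hb2 : 0 < b / 2 := half_pos hb
  refine Integrable.mono
    (g := fun x => (1 + (b/2)⁻¹ + (b/2)⁻¹) * Real.exp (-(b/2) * x ^ 2)) ?_ ?_ ?_
  · exact (integrable_exp_neg_mul_sq hb2).const_mul _
  · exact ((hwc.mul ((measurable_id.pow_const 2).const_mul (-b)).exp.neg.neg).mul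
      hkc).aestronglyMeasurable.congr (by
        refine ae_of_all _ fun x => ?_
        simp [neg_mul])
  · refine ae_of_all _ fun x => ?_
    have hsplit : Real.exp (-(b * x ^ 2)) =
        Real.exp (-(b/2 * x ^ 2)) * Real.exp (-(b/2 * x ^ 2)) := by
      rw [← Real.exp_add]; ring_nf
    have he : 0 < Real.exp (-(b/2 * x ^ 2)) := Real.exp_pos _
    have key : (|x| + x ^ 2) * Real.exp (-(b/2 * x ^ 2)) ≤ 1 + (b/2)⁻¹ + (b/2)⁻¹ := by
      have h1 := abs_mul_exp_le hb2 x
      have h3 : x ^ 2 * Real.exp (-(b/2 * x ^ 2)) ≤ (b/2)⁻¹ := sq_mul_exp_le hb2 x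
      nlinarith [abs_nonneg x, he]
    simp only [Real.norm_eq_abs, neg_mul]
    calc |w x * Real.exp (-(b * x ^ 2)) * k x|
        = |w x| * Real.exp (-(b * x ^ 2)) * |k x| := by
          rw [abs_mul, abs_mul, abs_of_pos (Real.exp_pos _)]
      _ ≤ (|x| + x ^ 2) * Real.exp (-(b * x ^ 2)) * 1 := by
          refine mul_le_mul (mul_le_mul_of_nonneg_right (hw x) (Real.exp_pos _).le) (hk x)
            (abs_nonneg _) (by positivity)
      _ = ((|x| + x ^ 2) * Real.exp (-(b/2 * x ^ 2))) * Real.exp (-(b/2 * x ^ 2)) := by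
          rw [hsplit]; ring
      _ ≤ (1 + (b/2)⁻¹ + (b/2)⁻¹) * Real.exp (-(b/2 * x ^ 2)) :=
          mul_le_mul_of_nonneg_right key he.le
      _ ≤ |(1 + (b/2)⁻¹ + (b/2)⁻¹) * Real.exp (-(b/2 * x ^ 2))| := le_abs_self _

/-! ### The Gaussian second moment -/

lemma integral_sq_exp {b : ℝ} (hb : 0 < b) :
    ∫ x : ℝ, x ^ 2 * Real.exp (-(b * x ^ 2)) = Real.sqrt (Real.pi / b) / (2 * b) := by
  have hrpow : ∀ x : ℝ, x ^ (2:ℝ) = x ^ (2:ℕ) := fun x => by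
    rw [show (2:ℝ) = ((2:ℕ):ℝ) by norm_num, Real.rpow_natCast]
  have hIoi := integral_rpow_mul_exp_neg_mul_rpow (p := 2) (q := 2)
    (by norm_num) (by norm_num) hb
  simp_rw [hrpow] at hIoi
  have heven : (∫ x : ℝ, x ^ 2 * Real.exp (-(b * x ^ 2)))
      = ∫ x : ℝ, |x| ^ 2 * Real.exp (-b * |x| ^ 2) := by
    congr 1; funext x; simp [sq_abs, neg_mul]
  rw [heven, integral_comp_abs (f := fun t => t ^ 2 * Real.exp (-b * t ^ 2)), hIoi]
  have hG : Real.Gamma (((2:ℝ) + 1) / 2) = 1/2 * Real.sqrt Real.pi := by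
    rw [show ((2:ℝ) + 1) / 2 = 1/2 + 1 by norm_num, Real.Gamma_add_one (by norm_num),
      Real.Gamma_one_half_eq]
  have hb32 : b ^ (-((2:ℝ) + 1) / 2) = (Real.sqrt b * b)⁻¹ := by
    rw [show -((2:ℝ) + 1) / 2 = -(1/2 + 1) by norm_num, Real.rpow_neg hb.le,
      Real.rpow_add hb, Real.rpow_one, ← Real.sqrt_eq_rpow]
  rw [hG, hb32, Real.sqrt_div Real.pi_pos.le]
  have hsb : Real.sqrt b ≠ 0 := (Real.sqrt_pos.2 hb).ne'
  field_simp

/-! ### The three component integrals -/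

lemma stdPhi_scaled {σ : ℝ} (hσ : 0 < σ) (x : ℝ) :
    stdPhi (x / σ) = (Real.sqrt (2 * Real.pi))⁻¹ * Real.exp (-((2 * σ ^ 2)⁻¹ * x ^ 2)) := by
  unfold stdPhi
  have h : -(x / σ) ^ 2 / 2 = -((2 * σ ^ 2)⁻¹ * x ^ 2) := by
    rw [neg_div, div_pow, div_div, inv_mul_eq_div, mul_comm (σ ^ 2) 2]
  rw [h]

lemma integrable_F {σ : ℝ} (hσ : 0 < σ) (a : ℝ) :
    Integrable (fun x => x * (σ⁻¹ * stdPhi (x / σ)) * stdPhi (a * x)) := by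
  have hb : 0 < (2 * σ ^ 2)⁻¹ := by positivity
  have heq : (fun x => x * (σ⁻¹ * stdPhi (x / σ)) * stdPhi (a * x))
      = fun x => (σ⁻¹ * (Real.sqrt (2 * Real.pi))⁻¹ * (Real.sqrt (2 * Real.pi))⁻¹) *
        (x * Real.exp (-((2 * σ ^ 2)⁻¹ * x ^ 2)) * (Real.sqrt (2 * Real.pi) * stdPhi (a * x))) := by
    funext x
    rw [stdPhi_scaled hσ]
    field_simp
  rw [heq]
  refine Integrable.const_mul ?_ _
  refine integrable_core hb measurable_id (fun x => le_add_of_nonneg_right (sq_nonneg x)) ?_ ?_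
  · exact measurable_const.mul (continuous_stdPhi.measurable.comp (measurable_id.const_mul a))
  · intro x
    rw [abs_of_nonneg (mul_nonneg sqrt_two_pi_pos.le (stdPhi_nonneg _))]
    calc Real.sqrt (2 * Real.pi) * stdPhi (a * x)
        ≤ Real.sqrt (2 * Real.pi) * (Real.sqrt (2 * Real.pi))⁻¹ :=
          mul_le_mul_of_nonneg_left (stdPhi_le _) sqrt_two_pi_pos.le
      _ = 1 := mul_inv_cancel₀ sqrt_two_pi_pos.ne'

lemma integrable_GH {σ : ℝ} (hσ : 0 < σ) {k : ℝ → ℝ}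
    (hkc : Measurable k) (hk0 : ∀ x, 0 ≤ k x) (hk1 : ∀ x, k x ≤ 1) :
    Integrable (fun x => x ^ 2 * (σ⁻¹ * stdPhi (x / σ)) * k x) := by
  have hb : 0 < (2 * σ ^ 2)⁻¹ := by positivity
  have heq : (fun x => x ^ 2 * (σ⁻¹ * stdPhi (x / σ)) * k x)
      = fun x => (σ⁻¹ * (Real.sqrt (2 * Real.pi))⁻¹) *
        (x ^ 2 * Real.exp (-((2 * σ ^ 2)⁻¹ * x ^ 2)) * k x) := by
    funext x
    rw [stdPhi_scaled hσ]
    ring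
  rw [heq]
  refine Integrable.const_mul ?_ _
  refine integrable_core hb (measurable_id.pow_const 2) (fun x => ?_) hkc
    (fun x => abs_le.2 ⟨by linarith [hk0 x], hk1 x⟩)
  rw [abs_of_nonneg (sq_nonneg x)]
  exact le_add_of_nonneg_left (abs_nonneg x)

lemma integral_F {σ : ℝ} (hσ : 0 < σ) (a : ℝ) :
    ∫ x, x * (σ⁻¹ * stdPhi (x / σ)) * stdPhi (a * x) = 0 := by
  set F := fun x => x * (σ⁻¹ * stdPhi (x / σ)) * stdPhi (a * x) with hF
  have hodd : ∀ x, F (-x) = -F x := fun x => by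
    simp only [hF]
    rw [neg_div, stdPhi_even, mul_neg, stdPhi_even]
    ring
  have h1 : ∫ x, F (-x) = ∫ x, F x := integral_neg_eq_self F volume
  have h2 : ∫ x, F (-x) = ∫ x, -(F x) := by simp_rw [hodd]
  rw [integral_neg] at h2
  linarith

lemma integral_H {σ : ℝ} (hσ : 0 < σ) :
    ∫ x, x ^ 2 * (σ⁻¹ * stdPhi (x / σ)) = σ ^ 2 := by
  have hb : 0 < (2 * σ ^ 2)⁻¹ := by positivity
  have heq : (fun x : ℝ => x ^ 2 * (σ⁻¹ * stdPhi (x / σ)))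
      = fun x => (σ⁻¹ * (Real.sqrt (2 * Real.pi))⁻¹) *
        (x ^ 2 * Real.exp (-((2 * σ ^ 2)⁻¹ * x ^ 2))) := by
    funext x
    rw [stdPhi_scaled hσ]
    ring
  rw [heq, integral_const_mul, integral_sq_exp hb]
  rw [show Real.pi / (2 * σ ^ 2)⁻¹ = 2 * Real.pi * σ ^ 2 by field_simp,
    Real.sqrt_mul (by positivity : (0:ℝ) ≤ 2 * Real.pi) (σ ^ 2), Real.sqrt_sq hσ.le]
  field_simp [sqrt_two_pi_pos.ne']

lemma integral_G {σ : ℝ} (hσ : 0 < σ) (a : ℝ) :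
    ∫ x, x ^ 2 * (σ⁻¹ * stdPhi (x / σ)) * stdCDF (a * x) = σ ^ 2 / 2 := by
  set G := fun x => x ^ 2 * (σ⁻¹ * stdPhi (x / σ)) * stdCDF (a * x) with hG
  have hkc : Measurable fun x => stdCDF (a * x) :=
    measurable_stdCDF.comp (measurable_id.const_mul a)
  have hGInt : Integrable G := integrable_GH hσ hkc (fun x => stdCDF_nonneg _)
    (fun x => stdCDF_le_one _)
  have hHInt : Integrable (fun x => x ^ 2 * (σ⁻¹ * stdPhi (x / σ))) := by
    have := integrable_GH hσ (k := fun _ => 1) measurable_const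
      (fun _ => zero_le_one) (fun _ => le_refl 1)
    simpa using this
  have hpt : ∀ x, G (-x) = x ^ 2 * (σ⁻¹ * stdPhi (x / σ)) - G x := fun x => by
    simp only [hG]
    rw [neg_div, stdPhi_even, mul_neg, stdCDF_neg]
    ring
  have h1 : ∫ x, G (-x) = ∫ x, G x := integral_neg_eq_self G volume
  have h2 : ∫ x, G (-x) = ∫ x, (x ^ 2 * (σ⁻¹ * stdPhi (x / σ)) - G x) := by simp_rw [hpt]
  rw [integral_sub hHInt hGInt, integral_H hσ] at h2
  have : ∫ x, G x = σ ^ 2 / 2 := by linarith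
  exact this

/-! ### Main theorem -/

theorem peakDensity_mean (ρ σ : ℝ) (hρ : |ρ| < 1) (hσ : 0 < σ) :
    (∫ x, x * peakDensity ρ σ x) = -Real.sqrt (Real.pi / 2) * ρ * σ := by
  have hρ2 : ρ ^ 2 < 1 := by nlinarith [sq_abs ρ, abs_nonneg ρ]
  set s := Real.sqrt (1 - ρ ^ 2) with hs_def
  have hs : 0 < s := Real.sqrt_pos.2 (by linarith)
  set a := -ρ / (s * σ) with ha_def
  set c := Real.sqrt (2 * Real.pi * (1 - ρ ^ 2)) with hc_def
  have hfun : (fun x => x * peakDensity ρ σ x)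
      = fun x => c * (x * (σ⁻¹ * stdPhi (x / σ)) * stdPhi (a * x)) +
          (c * a) * (x ^ 2 * (σ⁻¹ * stdPhi (x / σ)) * stdCDF (a * x)) := by
    funext x
    unfold peakDensity psi
    rw [show -ρ * x / (Real.sqrt (1 - ρ ^ 2) * σ) = a * x by rw [ha_def, hs_def]; ring]
    ring
  have hkc : Measurable fun x => stdCDF (a * x) :=
    measurable_stdCDF.comp (measurable_id.const_mul a)
  rw [hfun, integral_add ((integrable_F hσ a).const_mul c)
    ((integrable_GH hσ hkc (fun x => stdCDF_nonneg _) (fun x => stdCDF_le_one _)).const_mul (c * a)),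
    integral_const_mul, integral_const_mul, integral_F hσ a, integral_G hσ a]
  have hc : c = Real.sqrt (2 * Real.pi) * s := by
    rw [hc_def, hs_def, Real.sqrt_mul (by positivity)]
  have hhalf : Real.sqrt (Real.pi / 2) = Real.sqrt (2 * Real.pi) / 2 := by
    rw [show Real.pi / 2 = 2 * Real.pi / 4 by ring,
      Real.sqrt_div (by positivity), show Real.sqrt 4 = 2 by
        rw [show (4:ℝ) = 2 ^ 2 by norm_num, Real.sqrt_sq (by norm_num)]]
  rw [hc, ha_def, hhalf]
  field_simp
  ring
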